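/- Let (Ω, F, P) be a probability space, X_n, X random variables valued in a metric space 𝒳, and L_n, L nonnegative real random variables on Ω with E_P[L_n] = E_P[L] = 1 for all n. Let Q_n and Q be the probability measures with densities L_n and L relative to P. If the pairs (X_n, L_n) converge in distribution (under P) to (X, L) as n → ∞, then for every bounded continuous f : 𝒳 → ℝ, E_{Q_n}[f(X_n)] → E_Q[f(X)]. -/

import Mathlib

open MeasureTheory Filter

/-- Change-of-measure weak convergence transfer principle: if `(Xₙ, Lₙ) ⇒ (X, L)` under `P`,
with `Lₙ, L` nonnegative of mean one, then the `Qₙ`-distribution of `Xₙ` converges weakly to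
the `Q`-distribution of `X`, where `dQₙ/dP = Lₙ`, `dQ/dP = L`. -/
theorem change_of_measure_weak_convergence
    {Ω : Type*} [MeasurableSpace Ω] (P : Measure Ω) [IsProbabilityMeasure P]
    {𝒳 : Type*} [MetricSpace 𝒳] [MeasurableSpace 𝒳] [BorelSpace 𝒳]
    (X : ℕ → Ω → 𝒳) (X' : Ω → 𝒳) (L : ℕ → Ω → ℝ) (L' : Ω → ℝ)
    (hXm : ∀ n, Measurable (X n)) (hX'm : Measurable X')
    (hLm : ∀ n, Measurable (L n)) (hL'm : Measurable L')
    (hLnn : ∀ n ω, 0 ≤ L n ω) (hL'nn : ∀ ω, 0 ≤ L' ω)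
    (hLmean : ∀ n, ∫ ω, L n ω ∂P = 1) (hL'mean : ∫ ω, L' ω ∂P = 1)
    (hconv : ∀ g : BoundedContinuousFunction (𝒳 × ℝ) ℝ,
      Tendsto (fun n => ∫ ω, g (X n ω, L n ω) ∂P) atTop (nhds (∫ ω, g (X' ω, L' ω) ∂P))) :
    ∀ f : BoundedContinuousFunction 𝒳 ℝ,
      Tendsto
        (fun n => ∫ ω, f (X n ω) ∂(P.withDensity fun ω => ENNReal.ofReal (L n ω)))
        atTop
        (nhds (∫ ω, f (X' ω) ∂(P.withDensity fun ω => ENNReal.ofReal (L' ω)))) := by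
  intro f
  -- Step 1: rewrite the `withDensity` integrals as integrals against `P`.
  have hrw : ∀ (Y : Ω → 𝒳) (Ls : Ω → ℝ), Measurable Ls → (∀ ω, 0 ≤ Ls ω) →
      ∫ ω, f (Y ω) ∂(P.withDensity fun ω => ENNReal.ofReal (Ls ω))
        = ∫ ω, f (Y ω) * Ls ω ∂P := by
    intro Y Ls hm hnn
    rw [show (fun ω => ENNReal.ofReal (Ls ω)) = (fun ω => ((Ls ω).toNNReal : ENNReal)) from rfl,
      integral_withDensity_eq_integral_smul hm.real_toNNReal]
    congr 1
    ext ω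
    rw [NNReal.smul_def, Real.coe_toNNReal _ (hnn ω), smul_eq_mul, mul_comm]
  have e1 : ∀ n, ∫ ω, f (X n ω) ∂(P.withDensity fun ω => ENNReal.ofReal (L n ω))
      = ∫ ω, f (X n ω) * L n ω ∂P := fun n => hrw (X n) (L n) (hLm n) (hLnn n)
  have e2 : ∫ ω, f (X' ω) ∂(P.withDensity fun ω => ENNReal.ofReal (L' ω))
      = ∫ ω, f (X' ω) * L' ω ∂P := hrw X' L' hL'm hL'nn
  simp only [e1, e2]
  -- basic constants and integrability
  set C : ℝ := ‖f‖ + 1 with hC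
  have hCpos : (0:ℝ) < C := by positivity
  have hfC : ∀ x, ‖f x‖ ≤ C := fun x => le_trans (f.norm_coe_le_norm x) (by simp [hC])
  have hL'int : Integrable L' P := by
    by_contra h
    rw [integral_undef h] at hL'mean
    exact one_ne_zero hL'mean.symm
  have hLint : ∀ n, Integrable (L n) P := by
    intro n
    by_contra h
    have := hLmean n
    rw [integral_undef h] at this
    exact one_ne_zero this.symm
  -- bounded continuous truncation test functions
  have gcont : ∀ M : ℕ, Continuous fun p : 𝒳 × ℝ => f p.1 * min (max p.2 0) (M:ℝ) :=
    fun M => (f.continuous.comp continuous_fst).mul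
      ((continuous_snd.max continuous_const).min continuous_const)
  have hminbd : ∀ (M : ℕ) (t : ℝ), ‖min (max t 0) (M:ℝ)‖ ≤ (M:ℝ) := by
    intro M t
    rw [Real.norm_eq_abs, abs_le]
    exact ⟨le_trans (neg_nonpos.mpr M.cast_nonneg)
      (le_min (le_max_right _ _) M.cast_nonneg), min_le_right _ _⟩
  let g : ℕ → BoundedContinuousFunction (𝒳 × ℝ) ℝ := fun M =>
    BoundedContinuousFunction.ofNormedAddCommGroup _ (gcont M) (C * M) (by
      intro p
      rw [norm_mul]
      exact mul_le_mul (hfC _) (hminbd M _) (norm_nonneg _) hCpos.le)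
  have hcont2 : ∀ M : ℕ, Continuous fun p : 𝒳 × ℝ => min (max p.2 0) (M:ℝ) :=
    fun M => (continuous_snd.max continuous_const).min continuous_const
  let h : ℕ → BoundedContinuousFunction (𝒳 × ℝ) ℝ := fun M =>
    BoundedContinuousFunction.ofNormedAddCommGroup _ (hcont2 M) (M:ℝ) (fun p => hminbd M _)
  have hmaxn : ∀ n ω, max (L n ω) 0 = L n ω := fun n ω => max_eq_left (hLnn n ω)
  have hmax' : ∀ ω, max (L' ω) 0 = L' ω := fun ω => max_eq_left (hL'nn ω)
  -- convergence of truncated quantities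
  have hB : ∀ M : ℕ, Tendsto (fun n => ∫ ω, f (X n ω) * min (L n ω) (M:ℝ) ∂P) atTop
      (nhds (∫ ω, f (X' ω) * min (L' ω) (M:ℝ) ∂P)) := by
    intro M
    have := hconv (g M)
    simpa only [g, BoundedContinuousFunction.coe_ofNormedAddCommGroup, hmaxn, hmax'] using this
  have hI : ∀ M : ℕ, Tendsto (fun n => ∫ ω, min (L n ω) (M:ℝ) ∂P) atTop
      (nhds (∫ ω, min (L' ω) (M:ℝ) ∂P)) := by
    intro M
    have := hconv (h M)
    simpa only [h, BoundedContinuousFunction.coe_ofNormedAddCommGroup, hmaxn, hmax'] using this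
  -- key truncation error bound
  have key : ∀ (Y : Ω → 𝒳) (Ls : Ω → ℝ), Measurable Y → Measurable Ls → (∀ ω, 0 ≤ Ls ω) →
      Integrable Ls P → (∫ ω, Ls ω ∂P = 1) → ∀ M : ℕ,
      |∫ ω, f (Y ω) * Ls ω ∂P - ∫ ω, f (Y ω) * min (Ls ω) (M:ℝ) ∂P|
        ≤ C * (1 - ∫ ω, min (Ls ω) (M:ℝ) ∂P) := by
    intro Y Ls hY hLs hnn hint hmean M
    have hmin_int : Integrable (fun ω => min (Ls ω) (M:ℝ)) P := by
      refine hint.mono ((hLs.min measurable_const).aestronglyMeasurable) (ae_of_all _ fun ω => ?_)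
      rw [Real.norm_eq_abs, Real.norm_eq_abs,
        abs_of_nonneg (le_min (hnn ω) M.cast_nonneg), abs_of_nonneg (hnn ω)]
      exact min_le_left _ _
    have hfY : AEStronglyMeasurable (fun ω => f (Y ω)) P :=
      (f.continuous.measurable.comp hY).aestronglyMeasurable
    have hint1 : Integrable (fun ω => f (Y ω) * Ls ω) P :=
      hint.bdd_mul hfY (c := C) (ae_of_all _ fun ω => hfC _)
    have hint2 : Integrable (fun ω => f (Y ω) * min (Ls ω) (M:ℝ)) P :=
      hmin_int.bdd_mul hfY (c := C) (ae_of_all _ fun ω => hfC _)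
    rw [← integral_sub hint1 hint2]
    have hring : ∀ ω, f (Y ω) * Ls ω - f (Y ω) * min (Ls ω) (M:ℝ)
        = f (Y ω) * (Ls ω - min (Ls ω) (M:ℝ)) := fun ω => by ring
    simp only [hring]
    have hint3 : Integrable (fun ω => f (Y ω) * (Ls ω - min (Ls ω) (M:ℝ))) P := by
      simpa only [Pi.sub_def, mul_sub] using hint1.sub hint2
    have hint4 : Integrable (fun ω => C * (Ls ω - min (Ls ω) (M:ℝ))) P := by
      simpa only [Pi.sub_apply] using (hint.sub hmin_int).const_mul C
    rw [← Real.norm_eq_abs]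
    calc ‖∫ ω, f (Y ω) * (Ls ω - min (Ls ω) (M:ℝ)) ∂P‖
        ≤ ∫ ω, ‖f (Y ω) * (Ls ω - min (Ls ω) (M:ℝ))‖ ∂P :=
          norm_integral_le_integral_norm _
      _ ≤ ∫ ω, C * (Ls ω - min (Ls ω) (M:ℝ)) ∂P := by
          refine integral_mono hint3.norm hint4 (fun ω => ?_)
          rw [norm_mul]
          refine mul_le_mul (hfC _) ?_ (norm_nonneg _) hCpos.le
          rw [Real.norm_eq_abs, abs_of_nonneg (sub_nonneg.mpr (min_le_left _ _))]
      _ = C * (1 - ∫ ω, min (Ls ω) (M:ℝ) ∂P) := by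
          rw [integral_const_mul, integral_sub hint hmin_int, hmean]
  have hA : ∀ (n M : ℕ), |∫ ω, f (X n ω) * L n ω ∂P - ∫ ω, f (X n ω) * min (L n ω) (M:ℝ) ∂P|
      ≤ C * (1 - ∫ ω, min (L n ω) (M:ℝ) ∂P) :=
    fun n M => key (X n) (L n) (hXm n) (hLm n) (hLnn n) (hLint n) (hLmean n) M
  have hA' : ∀ M : ℕ, |∫ ω, f (X' ω) * L' ω ∂P - ∫ ω, f (X' ω) * min (L' ω) (M:ℝ) ∂P|
      ≤ C * (1 - ∫ ω, min (L' ω) (M:ℝ) ∂P) :=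
    fun M => key X' L' hX'm hL'm hL'nn hL'int hL'mean M
  -- the truncated mean of L' tends to 1 as M → ∞
  have hI1 : Tendsto (fun M : ℕ => ∫ ω, min (L' ω) (M:ℝ) ∂P) atTop (nhds 1) := by
    rw [← hL'mean]
    refine tendsto_integral_of_dominated_convergence L'
      (fun M => (hL'm.min measurable_const).aestronglyMeasurable) hL'int
      (fun M => ae_of_all _ fun ω => ?_) (ae_of_all _ fun ω => ?_)
    · rw [Real.norm_eq_abs, abs_of_nonneg (le_min (hL'nn ω) (Nat.cast_nonneg M))]
      exact min_le_left _ _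
    · refine Tendsto.congr' ?_ tendsto_const_nhds
      filter_upwards [eventually_ge_atTop ⌈L' ω⌉₊] with M hM
      exact (min_eq_left (le_trans (Nat.le_ceil _) (Nat.cast_le.mpr hM))).symm
  -- final epsilon argument
  rw [Metric.tendsto_atTop]
  intro ε hε
  have hto0 : Tendsto (fun M : ℕ => C * (1 - ∫ ω, min (L' ω) (M:ℝ) ∂P)) atTop (nhds 0) := by
    have := (tendsto_const_nhds (x := (1:ℝ)).sub hI1).const_mul C
    simpa using this
  obtain ⟨M, hM⟩ := (hto0.eventually_lt_const (by positivity : (0:ℝ) < ε/4)).exists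
  have h2 : Tendsto (fun n => C * (1 - ∫ ω, min (L n ω) (M:ℝ) ∂P)) atTop
      (nhds (C * (1 - ∫ ω, min (L' ω) (M:ℝ) ∂P))) :=
    (tendsto_const_nhds.sub (hI M)).const_mul C
  have ev1 : ∀ᶠ n in atTop, C * (1 - ∫ ω, min (L n ω) (M:ℝ) ∂P) < ε/2 :=
    h2.eventually_lt_const (lt_trans hM (by linarith))
  have ev2 : ∀ᶠ n in atTop,
      dist (∫ ω, f (X n ω) * min (L n ω) (M:ℝ) ∂P) (∫ ω, f (X' ω) * min (L' ω) (M:ℝ) ∂P) < ε/4 :=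
    (hB M) (Metric.ball_mem_nhds _ (by positivity))
  obtain ⟨N, hN⟩ := eventually_atTop.mp (ev1.and ev2)
  refine ⟨N, fun n hn => ?_⟩
  obtain ⟨h1, h2'⟩ := hN n hn
  rw [Real.dist_eq] at h2' ⊢
  have t1 := hA n M
  have t2 := hA' M
  have habs : |∫ ω, f (X n ω) * L n ω ∂P - ∫ ω, f (X' ω) * L' ω ∂P|
      ≤ |∫ ω, f (X n ω) * L n ω ∂P - ∫ ω, f (X n ω) * min (L n ω) (M:ℝ) ∂P|
        + |∫ ω, f (X n ω) * min (L n ω) (M:ℝ) ∂P - ∫ ω, f (X' ω) * min (L' ω) (M:ℝ) ∂P|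
        + |∫ ω, f (X' ω) * min (L' ω) (M:ℝ) ∂P - ∫ ω, f (X' ω) * L' ω ∂P| := by
    have := abs_sub_le (∫ ω, f (X n ω) * L n ω ∂P)
      (∫ ω, f (X n ω) * min (L n ω) (M:ℝ) ∂P) (∫ ω, f (X' ω) * L' ω ∂P)
    have := abs_sub_le (∫ ω, f (X n ω) * min (L n ω) (M:ℝ) ∂P)
      (∫ ω, f (X' ω) * min (L' ω) (M:ℝ) ∂P) (∫ ω, f (X' ω) * L' ω ∂P)
    linarith [abs_sub_le (∫ ω, f (X n ω) * L n ω ∂P)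
      (∫ ω, f (X n ω) * min (L n ω) (M:ℝ) ∂P) (∫ ω, f (X' ω) * L' ω ∂P)]
  have t2' : |∫ ω, f (X' ω) * min (L' ω) (M:ℝ) ∂P - ∫ ω, f (X' ω) * L' ω ∂P|
      ≤ C * (1 - ∫ ω, min (L' ω) (M:ℝ) ∂P) := by rw [abs_sub_comm]; exact t2
  have p1 := lt_of_le_of_lt t1 h1
  have p3 := lt_of_le_of_lt t2' hM
  have := lt_of_le_of_lt habs (by linarith [p1, p3, h2'] :
    |∫ ω, f (X n ω) * L n ω ∂P - ∫ ω, f (X n ω) * min (L n ω) (M:ℝ) ∂P|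
      + |∫ ω, f (X n ω) * min (L n ω) (M:ℝ) ∂P - ∫ ω, f (X' ω) * min (L' ω) (M:ℝ) ∂P|
      + |∫ ω, f (X' ω) * min (L' ω) (M:ℝ) ∂P - ∫ ω, f (X' ω) * L' ω ∂P| < ε)
  exact this
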